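/- There exists an absolute constant C > 0 (one may take C = 4/(25e)) such that for all u ∈ [1/2, 2], all r > 0, all y ∈ [−1/2, 1/2], and z = e^{−r + 2πiy}, one has |F(z,u)| ≤ F(|z|,u) · exp(−C · Σ_{h ∈ S(r)} ‖hy‖²). -/

import Mathlib

open Filter Set

noncomputable section

/-- The multiplicative monoid generated by the bases `p 0, …, p (m-1)`. -/
def multiS (m : ℕ) (p : Fin m → ℕ) : Set ℕ :=
  {h | ∃ α : Fin m → ℕ, h = ∏ j, p j ^ α j}

/-- `S(r) = {h ∈ S : h·r ≤ 1}`. -/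
def multiSr (m : ℕ) (p : Fin m → ℕ) (r : ℝ) : Set ℕ :=
  {h | h ∈ multiS m p ∧ (h : ℝ) * r ≤ 1}

/-- The distance from a real number to the nearest integer. -/
def nintDist (x : ℝ) : ℝ := |x - round x|

/-- `F(z,u) = ∏_{h ∈ S} (1 + u z^h + u² z^{2h} + ⋯ + u^{d-1} z^{(d-1)h})`. -/
def prodF (d m : ℕ) (p : Fin m → ℕ) (z : ℂ) (u : ℝ) : ℂ :=
  ∏' h : multiS m p, ∑ j ∈ Finset.range d, (u : ℂ) ^ j * z ^ (j * (h : ℕ))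

/-- The real version of `F`, evaluated at a positive real argument. -/
def prodFR (d m : ℕ) (p : Fin m → ℕ) (x u : ℝ) : ℝ :=
  ∏' h : multiS m p, ∑ j ∈ Finset.range d, u ^ j * x ^ (j * (h : ℕ))


lemma nintDist_le_half (t : ℝ) : nintDist t ≤ 1 / 2 := abs_sub_round t

lemma sin_sq_ge (t : ℝ) : 4 * nintDist t ^ 2 ≤ Real.sin (Real.pi * t) ^ 2 := by
  set n := round t with hn
  set s := t - n with hs
  have hsabs : |s| ≤ 1 / 2 := abs_sub_round t
  have h1 : Real.sin (Real.pi * t) ^ 2 = Real.sin (Real.pi * s) ^ 2 := by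
    have ht : Real.pi * t = Real.pi * s + n * Real.pi := by rw [hs]; push_cast; ring
    have hab : |(-1 : ℝ) ^ n| = 1 := by
      rcases Int.even_or_odd n with h | h
      · rw [h.neg_one_zpow]; norm_num
      · rw [Odd.neg_one_zpow h]; norm_num
    rw [ht, Real.sin_add_int_mul_pi, mul_pow, ← sq_abs ((-1 : ℝ) ^ n), hab]
    ring
  have h2 : 2 * |s| ≤ |Real.sin (Real.pi * s)| := by
    have hp := Real.pi_pos
    have hkey := Real.mul_le_sin (x := Real.pi * |s|) (by positivity)
      (by nlinarith [abs_nonneg s])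
    have heq : 2 / Real.pi * (Real.pi * |s|) = 2 * |s| := by
      field_simp
    rw [heq] at hkey
    rcases abs_cases s with ⟨h, _⟩ | ⟨h, _⟩
    · rw [h] at hkey ⊢
      exact hkey.trans (le_abs_self _)
    · rw [h] at hkey
      rw [h]
      have : Real.sin (Real.pi * -s) = -Real.sin (Real.pi * s) := by
        rw [mul_neg, Real.sin_neg]
      rw [this] at hkey
      exact hkey.trans (neg_le_abs _)
  have h3 : (2 * |s|) ^ 2 ≤ |Real.sin (Real.pi * s)| ^ 2 :=
    pow_le_pow_left₀ (by positivity) h2 2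
  rw [sq_abs] at h3
  have : nintDist t = |s| := rfl
  rw [h1, this]
  nlinarith [abs_nonneg s]

lemma key_factor {d : ℕ} (hd : 2 ≤ d) {a t : ℝ}
    (ha1 : (2 * Real.exp 1)⁻¹ ≤ a) (ha2 : a ≤ 2) :
    ‖∑ j ∈ Finset.range d,
        ((a : ℂ) * Complex.exp (((2 * Real.pi * t : ℝ) : ℂ) * Complex.I)) ^ j‖
      ≤ (∑ j ∈ Finset.range d, a ^ j) *
          Real.exp (-(Real.exp 1 * 2 ^ d)⁻¹ * nintDist t ^ 2) := by
  have he : (0 : ℝ) < Real.exp 1 := Real.exp_pos 1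
  have ha0 : (0 : ℝ) < a := lt_of_lt_of_le (by positivity) ha1
  set θ : ℝ := 2 * Real.pi * t with hθ
  set E : ℂ := Complex.exp ((θ : ℂ) * Complex.I) with hE
  set δ : ℝ := nintDist t with hδ
  have hδ0 : 0 ≤ δ := abs_nonneg _
  have hδh : δ ≤ 1 / 2 := nintDist_le_half t
  have hEabs : ‖E‖ = 1 := Complex.norm_exp_ofReal_mul_I θ
  have habs_pow : ∀ j : ℕ, ‖((a : ℂ) * E) ^ j‖ = a ^ j := by
    intro j
    rw [norm_pow, norm_mul, Complex.norm_real, Real.norm_eq_abs, hEabs, mul_one, abs_of_pos ha0]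
  set c : ℝ := Real.cos θ with hc
  have hc1 : -1 ≤ c := Real.neg_one_le_cos θ
  have hc2 : c ≤ 1 := Real.cos_le_one θ
  -- cosine bound
  have hcos : 8 * δ ^ 2 ≤ 1 - c := by
    have h2 : θ = 2 * (Real.pi * t) := by rw [hθ]; ring
    have := sin_sq_ge t
    have hcc : c = Real.cos (2 * (Real.pi * t)) := by rw [hc, ← h2]
    rw [hcc]
    nlinarith [Real.sin_sq_add_cos_sq (Real.pi * t), Real.cos_two_mul (Real.pi * t),
      sin_sq_ge t]
  -- bound on |1 + a E|
  have hEc : E = ((c : ℝ) : ℂ) + ((Real.sin θ : ℝ) : ℂ) * Complex.I := by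
    rw [hE, Complex.exp_mul_I, ← Complex.ofReal_cos, ← Complex.ofReal_sin, ← hc]
  have hone : (1 : ℂ) + (a : ℂ) * E
      = ((1 + a * c : ℝ) : ℂ) + ((a * Real.sin θ : ℝ) : ℂ) * Complex.I := by
    rw [hEc]; push_cast; ring
  have habs1 : ‖1 + (a : ℂ) * E‖ ≤ 1 + a - a * (1 - c) / 3 := by
    rw [hone, Complex.norm_def, Complex.normSq_add_mul_I]
    have hsc := Real.sin_sq_add_cos_sq θ
    have hR0 : (0 : ℝ) ≤ 1 + a - a * (1 - c) / 3 := by nlinarith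
    have hXR : (1 + a * c) ^ 2 + (a * Real.sin θ) ^ 2 ≤ (1 + a - a * (1 - c) / 3) ^ 2 := by
      nlinarith [sq_nonneg (a * (1 - c)), mul_nonneg ha0.le (sub_nonneg.2 hc2)]
    calc Real.sqrt ((1 + a * c) ^ 2 + (a * Real.sin θ) ^ 2)
        ≤ Real.sqrt ((1 + a - a * (1 - c) / 3) ^ 2) := Real.sqrt_le_sqrt hXR
      _ = 1 + a - a * (1 - c) / 3 := Real.sqrt_sq hR0
  -- split sums
  have hsplitC : ∑ j ∈ Finset.range d, ((a : ℂ) * E) ^ j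
      = 1 + (a : ℂ) * E + ∑ j ∈ Finset.Ico 2 d, ((a : ℂ) * E) ^ j := by
    rw [Finset.range_eq_Ico, Finset.sum_eq_sum_Ico_succ_bot (by omega : 0 < d),
      Finset.sum_eq_sum_Ico_succ_bot (by omega : 1 < d), pow_zero, pow_one]
    ring
  have hsplitR : ∑ j ∈ Finset.range d, a ^ j
      = 1 + a + ∑ j ∈ Finset.Ico 2 d, a ^ j := by
    rw [Finset.range_eq_Ico, Finset.sum_eq_sum_Ico_succ_bot (by omega : 0 < d),
      Finset.sum_eq_sum_Ico_succ_bot (by omega : 1 < d), pow_zero, pow_one]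
    ring
  set T : ℝ := ∑ j ∈ Finset.Ico 2 d, a ^ j with hT
  have hT0 : 0 ≤ T := Finset.sum_nonneg fun j _ => by positivity
  have htail : ‖∑ j ∈ Finset.Ico 2 d, ((a : ℂ) * E) ^ j‖ ≤ T := by
    refine (norm_sum_le _ _).trans ?_
    rw [hT]
    exact Finset.sum_le_sum fun j _ => le_of_eq (habs_pow j)
  have hLHS : ‖∑ j ∈ Finset.range d, ((a : ℂ) * E) ^ j‖
      ≤ (∑ j ∈ Finset.range d, a ^ j) - a * (1 - c) / 3 := by
    rw [hsplitC, hsplitR]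
    calc ‖1 + (a : ℂ) * E + ∑ j ∈ Finset.Ico 2 d, ((a : ℂ) * E) ^ j‖
        ≤ ‖1 + (a : ℂ) * E‖
            + ‖∑ j ∈ Finset.Ico 2 d, ((a : ℂ) * E) ^ j‖ := norm_add_le _ _
      _ ≤ (1 + a - a * (1 - c) / 3) + T := add_le_add habs1 htail
      _ = 1 + a + T - a * (1 - c) / 3 := by ring
  -- upper bound on the real sum
  set Sa : ℝ := ∑ j ∈ Finset.range d, a ^ j with hSa
  have hS0 : 0 ≤ Sa := Finset.sum_nonneg fun j _ => by positivity
  have hSub : Sa ≤ 2 ^ d := by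
    have h1 : Sa ≤ ∑ j ∈ Finset.range d, (2 : ℝ) ^ j :=
      Finset.sum_le_sum fun j _ => pow_le_pow_left₀ ha0.le ha2 j
    have h2 : ∑ j ∈ Finset.range d, (2 : ℝ) ^ j = 2 ^ d - 1 := by
      rw [geom_sum_eq (by norm_num) d]; norm_num
    linarith
  -- final comparison
  set C : ℝ := (Real.exp 1 * 2 ^ d)⁻¹ with hC
  have hC0 : 0 < C := by positivity
  have hCd : C * 2 ^ d = (Real.exp 1)⁻¹ := by
    rw [hC, mul_inv]
    field_simp
  have hexp : 1 - C * δ ^ 2 ≤ Real.exp (-(C * δ ^ 2)) := by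
    have := Real.add_one_le_exp (-(C * δ ^ 2)); linarith
  have hmain : Sa - a * (1 - c) / 3 ≤ Sa * Real.exp (-C * δ ^ 2) := by
    have h1 : (2 * Real.exp 1)⁻¹ * (8 * δ ^ 2) ≤ a * (1 - c) :=
      mul_le_mul ha1 hcos (by positivity) ha0.le
    have h2 : Sa * (1 - C * δ ^ 2) ≤ Sa * Real.exp (-(C * δ ^ 2)) :=
      mul_le_mul_of_nonneg_left hexp hS0
    have h3 : Sa * (C * δ ^ 2) ≤ 2 ^ d * (C * δ ^ 2) :=
      mul_le_mul_of_nonneg_right hSub (by positivity)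
    have h4 : (2 : ℝ) ^ d * (C * δ ^ 2) = (Real.exp 1)⁻¹ * δ ^ 2 := by
      rw [← hCd]; ring
    have h5 : (2 * Real.exp 1)⁻¹ * (8 * δ ^ 2) = 4 * ((Real.exp 1)⁻¹ * δ ^ 2) / 3 * 3 := by
      rw [mul_inv]; field_simp; ring
    have h6 : (0:ℝ) ≤ (Real.exp 1)⁻¹ * δ ^ 2 := by positivity
    have h7 : -C * δ ^ 2 = -(C * δ ^ 2) := by ring
    rw [h7]
    nlinarith
  calc ‖∑ j ∈ Finset.range d, ((a : ℂ) * E) ^ j‖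
      ≤ Sa - a * (1 - c) / 3 := hLHS
    _ ≤ Sa * Real.exp (-C * δ ^ 2) := hmain

lemma abs_aE_pow {a : ℝ} (ha : 0 ≤ a) (t : ℝ) (j : ℕ) :
    ‖((a : ℂ) * Complex.exp ((t : ℂ) * Complex.I)) ^ j‖ = a ^ j := by
  rw [norm_pow, norm_mul, Complex.norm_real, Real.norm_eq_abs, Complex.norm_exp_ofReal_mul_I, mul_one, abs_of_nonneg ha]

lemma tail_sum_le {d : ℕ} {b c : ℝ} (hb0 : 0 ≤ b) (hb2 : b ≤ 2) (hc0 : 0 ≤ c) (hc1 : c ≤ 1) :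
    ∑ j ∈ Finset.Ico 1 d, (b * c) ^ j ≤ 2 ^ d * c := by
  have hstep : ∀ j ∈ Finset.Ico 1 d, (b * c) ^ j ≤ 2 ^ j * c := by
    intro j hj
    rw [Finset.mem_Ico] at hj
    have h1 : (b * c) ^ j = b ^ j * c ^ j := mul_pow b c j
    have h2 : c ^ j ≤ c := pow_le_of_le_one hc0 hc1 (by omega)
    have h3 : b ^ j ≤ 2 ^ j := pow_le_pow_left₀ hb0 hb2 j
    have h4 : (0:ℝ) ≤ b ^ j := pow_nonneg hb0 j
    have h5 : (0:ℝ) ≤ c ^ j := pow_nonneg hc0 j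
    nlinarith
  calc ∑ j ∈ Finset.Ico 1 d, (b * c) ^ j ≤ ∑ j ∈ Finset.Ico 1 d, (2:ℝ) ^ j * c :=
        Finset.sum_le_sum hstep
    _ = (∑ j ∈ Finset.Ico 1 d, (2:ℝ) ^ j) * c := by rw [Finset.sum_mul]
    _ ≤ 2 ^ d * c := by
        have hsub : ∑ j ∈ Finset.Ico 1 d, (2:ℝ) ^ j ≤ ∑ j ∈ Finset.range d, (2:ℝ) ^ j := by
          apply Finset.sum_le_sum_of_subset_of_nonneg
          · rw [Finset.range_eq_Ico]
            exact Finset.Ico_subset_Ico (by omega) le_rfl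
          · intros; positivity
        have hgeom : ∑ j ∈ Finset.range d, (2:ℝ) ^ j = 2 ^ d - 1 := by
          rw [geom_sum_eq (by norm_num) d]; norm_num
        nlinarith

theorem prodF_tail_bound (d m : ℕ) (p : Fin m → ℕ)
    (hd : 2 ≤ d) (hm : 2 ≤ m) (hp : ∀ j, 1 < p j) (hmono : StrictMono p)
    (hcop : ∀ i j, i ≠ j → Nat.Coprime (p i) (p j)) :
    ∃ C > (0 : ℝ), ∀ u ∈ Set.Icc (1 / 2 : ℝ) 2, ∀ r : ℝ, 0 < r →
      ∀ y ∈ Set.Icc (-(1 / 2) : ℝ) (1 / 2),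
        ‖prodF d m p (Complex.exp (-(r : ℂ) + 2 * Real.pi * Complex.I * (y : ℂ))) u‖ ≤
          prodFR d m p (Real.exp (-r)) u *
            Real.exp (-C * ∑' h : multiSr m p r, nintDist ((h : ℕ) * y) ^ 2) := by
  classical
  have he : (0:ℝ) < Real.exp 1 := Real.exp_pos 1
  refine ⟨(Real.exp 1 * 2 ^ d)⁻¹, by positivity, ?_⟩
  intro u hu r hr y hy
  obtain ⟨hu1, hu2⟩ := hu
  have hu0 : (0:ℝ) < u := lt_of_lt_of_le one_half_pos hu1
  set C : ℝ := (Real.exp 1 * 2 ^ d)⁻¹ with hC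
  have hC0 : (0:ℝ) < C := by rw [hC]; positivity
  set z : ℂ := Complex.exp (-(r : ℂ) + 2 * Real.pi * Complex.I * (y : ℂ)) with hz
  set x : ℝ := Real.exp (-r) with hx
  have hx0 : (0:ℝ) < x := Real.exp_pos _
  have hx1 : x < 1 := by rw [hx]; exact Real.exp_lt_one_iff.mpr (by linarith)
  set f : multiS m p → ℂ :=
    fun h => ∑ j ∈ Finset.range d, (u : ℂ) ^ j * z ^ (j * (h : ℕ)) with hfdef
  set g : multiS m p → ℝ :=
    fun h => ∑ j ∈ Finset.range d, u ^ j * x ^ (j * (h : ℕ)) with hgdef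
  have hprodF : prodF d m p z u = ∏' h, f h := rfl
  have hprodFR : prodFR d m p x u = ∏' h, g h := rfl
  -- rewriting of factors
  have hxh : ∀ n : ℕ, x ^ n = Real.exp (-(r * n)) := by
    intro n
    rw [hx, ← Real.exp_nat_mul]
    congr 1
    ring
  have hfact : ∀ h : multiS m p,
      f h = ∑ j ∈ Finset.range d, (((u * Real.exp (-(r * (h:ℕ))) : ℝ) : ℂ) *
        Complex.exp (((2 * Real.pi * ((h:ℕ) * y) : ℝ) : ℂ) * Complex.I)) ^ j := by
    intro h
    rw [hfdef]
    refine Finset.sum_congr rfl fun j _ => ?_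
    have hzn : z ^ (h:ℕ) = ((Real.exp (-(r * (h:ℕ))) : ℝ) : ℂ) *
        Complex.exp (((2 * Real.pi * ((h:ℕ) * y) : ℝ) : ℂ) * Complex.I) := by
      rw [hz, ← Complex.exp_nat_mul, Complex.ofReal_exp, ← Complex.exp_add]
      congr 1
      push_cast
      ring
    rw [mul_comm j ((h:ℕ)), pow_mul, hzn, mul_pow, ← mul_pow]
    congr 2
    push_cast
    ring
  have hgact : ∀ h : multiS m p,
      g h = ∑ j ∈ Finset.range d, (u * Real.exp (-(r * (h:ℕ)))) ^ j := by
    intro h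
    rw [hgdef]
    refine Finset.sum_congr rfl fun j _ => ?_
    rw [mul_comm j ((h:ℕ)), pow_mul, hxh, mul_pow]
  -- basic bounds on a := u * exp (-(r h))
  have haxh : ∀ h : multiS m p, 0 < u * Real.exp (-(r * (h:ℕ))) :=
    fun h => mul_pos hu0 (Real.exp_pos _)
  have haub : ∀ h : multiS m p, u * Real.exp (-(r * (h:ℕ))) ≤ 2 := by
    intro h
    have h1 : Real.exp (-(r * (h:ℕ))) ≤ 1 := Real.exp_le_one_iff.mpr (neg_nonpos.mpr (by positivity))
    nlinarith [Real.exp_pos (-(r * ((h:ℕ):ℝ)))]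
  -- the weight function
  set w : multiS m p → ℝ :=
    fun h => if ((h:ℕ):ℝ) * r ≤ 1 then Real.exp (-C * nintDist ((h:ℕ) * y) ^ 2) else 1
    with hwdef
  have hw_pos : ∀ h, 0 < w h := by
    intro h
    rw [hwdef]
    dsimp only
    split
    · exact Real.exp_pos _
    · exact one_pos
  have hw_le1 : ∀ h, w h ≤ 1 := by
    intro h
    rw [hwdef]
    dsimp only
    split
    · apply Real.exp_le_one_iff.mpr
      have : (0:ℝ) ≤ nintDist ((h:ℕ) * y) ^ 2 := sq_nonneg _
      nlinarith
    · exact le_rfl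
  -- pointwise bounds
  have hg_ge1 : ∀ h, 1 ≤ g h := by
    intro h
    rw [hgact h, Finset.range_eq_Ico, Finset.sum_eq_sum_Ico_succ_bot (by omega : 0 < d), pow_zero]
    have : (0:ℝ) ≤ ∑ j ∈ Finset.Ico 1 d, (u * Real.exp (-(r * (h:ℕ)))) ^ j :=
      Finset.sum_nonneg fun j _ => pow_nonneg (haxh h).le j
    linarith
  have hg_ub : ∀ h, g h ≤ 1 + 2 ^ d * x ^ (h:ℕ) := by
    intro h
    rw [hgact h, Finset.range_eq_Ico, Finset.sum_eq_sum_Ico_succ_bot (by omega : 0 < d), pow_zero]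
    simp only [← hxh]
    have := tail_sum_le (d := d) (b := u) (c := x ^ ((h:ℕ))) hu0.le hu2
      (pow_nonneg hx0.le _) (pow_le_one₀ hx0.le hx1.le)
    linarith
  have hf_sub_one : ∀ h, ‖f h - 1‖ ≤ 2 ^ d * x ^ (h:ℕ) := by
    intro h
    have hsplit : f h = 1 + ∑ j ∈ Finset.Ico 1 d,
        (((u * Real.exp (-(r * (h:ℕ))) : ℝ) : ℂ) *
          Complex.exp (((2 * Real.pi * ((h:ℕ) * y) : ℝ) : ℂ) * Complex.I)) ^ j := by
      rw [hfact h, Finset.range_eq_Ico, Finset.sum_eq_sum_Ico_succ_bot (by omega : 0 < d),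
        pow_zero]
    rw [hsplit, add_sub_cancel_left]
    calc ‖∑ j ∈ Finset.Ico 1 d,
          (((u * Real.exp (-(r * (h:ℕ))) : ℝ) : ℂ) *
            Complex.exp (((2 * Real.pi * ((h:ℕ) * y) : ℝ) : ℂ) * Complex.I)) ^ j‖
        ≤ ∑ j ∈ Finset.Ico 1 d, (u * Real.exp (-(r * (h:ℕ)))) ^ j := by
          refine (norm_sum_le _ _).trans ?_
          exact Finset.sum_le_sum fun j _ => le_of_eq (abs_aE_pow (haxh h).le _ j)
      _ ≤ 2 ^ d * x ^ (h:ℕ) := by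
          simp only [← hxh]
          exact tail_sum_le (d := d) (b := u) (c := x ^ ((h:ℕ))) hu0.le hu2
            (pow_nonneg hx0.le _) (pow_le_one₀ hx0.le hx1.le)
  have hfw : ∀ h, ‖f h‖ ≤ g h * w h := by
    intro h
    by_cases hcond : ((h:ℕ):ℝ) * r ≤ 1
    · have hw_eq : w h = Real.exp (-C * nintDist ((h:ℕ) * y) ^ 2) := by
        rw [hwdef]; exact if_pos hcond
      rw [hw_eq, hfact h, hgact h]
      apply key_factor hd
      · have h1 : Real.exp (-1 : ℝ) ≤ Real.exp (-(r * (h:ℕ))) :=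
          Real.exp_le_exp.mpr (by nlinarith)
        rw [Real.exp_neg] at h1
        calc (2 * Real.exp 1)⁻¹ = (1/2) * (Real.exp 1)⁻¹ := by rw [mul_inv]; ring
          _ ≤ u * Real.exp (-(r * (h:ℕ))) := by
              apply mul_le_mul hu1 h1 (by positivity) (by linarith)
      · exact haub h
    · have hw_eq : w h = 1 := by rw [hwdef]; exact if_neg hcond
      rw [hw_eq, mul_one, hfact h, hgact h]
      refine (norm_sum_le _ _).trans ?_
      exact Finset.sum_le_sum fun j _ => le_of_eq (abs_aE_pow (haxh h).le _ j)
  -- summability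
  have hq : Summable (fun h : multiS m p => x ^ (h:ℕ)) :=
    (summable_geometric_of_lt_one hx0.le hx1).subtype _
  have hB : Summable (fun h : multiS m p => (2:ℝ) ^ d * x ^ (h:ℕ)) := hq.mul_left _
  have hlog_g : Summable (fun h : multiS m p => Real.log (g h)) := by
    apply Summable.of_nonneg_of_le (fun h => Real.log_nonneg (hg_ge1 h))
      (fun h => ?_) hB
    have h1 := Real.log_le_sub_one_of_pos (lt_of_lt_of_le one_pos (hg_ge1 h))
    have h2 := hg_ub h
    linarith
  have hMg : Multipliable g :=
    Real.multipliable_of_summable_log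
      (fun h => lt_of_lt_of_le one_pos (hg_ge1 h)) hlog_g
  -- the finite set S(r)
  have hfin : (multiSr m p r).Finite := by
    apply Set.Finite.subset (Set.finite_le_nat ⌈1/r⌉₊)
    intro n hn
    have h1 : (n:ℝ) ≤ 1 / r := by
      rw [le_div_iff₀ hr]
      exact hn.2
    have h2 : (n:ℝ) ≤ (⌈1/r⌉₊ : ℝ) := h1.trans (Nat.le_ceil _)
    exact_mod_cast h2
  haveI : Fintype (multiSr m p r) := hfin.fintype
  set emb : multiSr m p r → multiS m p := fun h => ⟨h.1, h.2.1⟩ with hembdef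
  have hembinj : Function.Injective emb := by
    intro a b hab
    have hval : (emb a).1 = (emb b).1 := congrArg Subtype.val hab
    exact Subtype.ext hval
  set sFin : Finset (multiS m p) := Finset.image emb Finset.univ with hsFin
  have hMw : Multipliable w := by
    apply multipliable_of_ne_finset_one (s := sFin)
    intro h hh
    rw [hwdef]
    apply if_neg
    intro hcond
    apply hh
    rw [hsFin]
    exact Finset.mem_image.mpr ⟨⟨h.1, h.2, hcond⟩, Finset.mem_univ _, rfl⟩
  have hgw_pos : ∀ h, 0 < g h * w h :=
    fun h => mul_pos (lt_of_lt_of_le one_pos (hg_ge1 h)) (hw_pos h)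
  have hlog_w : Summable (fun h : multiS m p => Real.log (w h)) := by
    apply summable_of_ne_finset_zero (s := sFin)
    intro h hh
    rw [hwdef]
    dsimp only
    rw [if_neg, Real.log_one]
    intro hcond
    apply hh
    rw [hsFin]
    exact Finset.mem_image.mpr ⟨⟨h.1, h.2, hcond⟩, Finset.mem_univ _, rfl⟩
  have hMgw : Multipliable (fun h => g h * w h) := by
    apply Real.multipliable_of_summable_log
      (fun h => hgw_pos h) ?_
    have : (fun h : multiS m p => Real.log (g h * w h))
        = fun h => Real.log (g h) + Real.log (w h) := by
      funext h
      exact Real.log_mul (by linarith [hg_ge1 h]) (hw_pos h).ne'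
    rw [this]
    exact hlog_g.add hlog_w
  -- nonnegativity of the real product
  have hG0 : 0 ≤ ∏' h, g h := by
    apply le_of_tendsto_of_tendsto' (tendsto_const_nhds (x := (0:ℝ))) hMg.hasProd
    intro s
    exact Finset.prod_nonneg fun i _ => by linarith [hg_ge1 i]
  -- the value of the finite product over sFin
  have hprod_s : ∏ h ∈ sFin, w h
      = Real.exp (-C * ∑' h : multiSr m p r, nintDist ((h:ℕ) * y) ^ 2) := by
    rw [tsum_fintype, hsFin, Finset.prod_image (fun a _ b _ hab => hembinj hab)]
    rw [Finset.mul_sum, Real.exp_sum]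
    apply Finset.prod_congr rfl
    intro h _
    rw [hwdef]
    dsimp only
    rw [if_pos h.2.2]
  have hWle : ∏' h, w h ≤ ∏ h ∈ sFin, w h := by
    apply le_of_tendsto hMw.hasProd
    filter_upwards [eventually_ge_atTop sFin] with F hF
    calc ∏ i ∈ F, w i = (∏ i ∈ F \ sFin, w i) * ∏ i ∈ sFin, w i :=
          (Finset.prod_sdiff hF).symm
      _ ≤ 1 * ∏ i ∈ sFin, w i := by
          apply mul_le_mul_of_nonneg_right
          · exact Finset.prod_le_one (fun i _ => (hw_pos i).le) (fun i _ => hw_le1 i)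
          · exact Finset.prod_nonneg fun i _ => (hw_pos i).le
      _ = ∏ i ∈ sFin, w i := one_mul _
  -- zero or nonzero case
  by_cases hzero : ∃ h0, f h0 = 0
  · obtain ⟨h0, hh0⟩ := hzero
    have hp0 : HasProd f 0 := by
      have hev : ∀ᶠ s : Finset (multiS m p) in atTop, (fun s => ∏ i ∈ s, f i) s = 0 := by
        filter_upwards [eventually_ge_atTop ({h0} : Finset (multiS m p))] with s hs
        exact Finset.prod_eq_zero (hs (Finset.mem_singleton_self h0)) hh0
      exact Tendsto.congr' (hev.mono fun s hs => hs.symm) tendsto_const_nhds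
    rw [hprodF, hp0.tprod_eq, norm_zero]
    exact mul_nonneg hG0 (Real.exp_pos _).le
  · push_neg at hzero
    have hlog_f : Summable (fun h : multiS m p => Complex.log (f h)) := by
      apply Summable.of_norm_bounded_eventually (g := fun h : multiS m p => 3/2 * ((2:ℝ) ^ d * x ^ (h:ℕ)))
        (hB.mul_left _)
      rw [Filter.eventually_cofinite]
      have hNfin : {n : ℕ | (1:ℝ)/2 < 2 ^ d * x ^ n}.Finite := by
        have htend : Tendsto (fun n : ℕ => (2:ℝ) ^ d * x ^ n) atTop (nhds 0) := by
          have := tendsto_pow_atTop_nhds_zero_of_lt_one hx0.le hx1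
          simpa using this.const_mul ((2:ℝ)^d)
        have hev : ∀ᶠ n : ℕ in atTop, (2:ℝ) ^ d * x ^ n < 1/2 :=
          htend.eventually (eventually_lt_nhds (by norm_num : (0:ℝ) < 1/2))
        obtain ⟨N, hN⟩ := eventually_atTop.mp hev
        apply Set.Finite.subset (Set.finite_lt_nat N)
        intro n hn
        by_contra hcon
        simp only [Set.mem_setOf_eq, not_lt] at hcon hn
        exact absurd (hN n hcon) (not_lt.mpr hn.le)
      apply Set.Finite.subset (hNfin.preimage (Set.injOn_of_injective Subtype.val_injective))
      intro h hh
      simp only [Set.mem_setOf_eq, not_le] at hh ⊢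
      by_contra hcon
      simp only [Set.mem_preimage, Set.mem_setOf_eq, not_lt] at hcon
      apply absurd hh
      push_neg
      have hhalf : ‖f h - 1‖ ≤ 1/2 := (hf_sub_one h).trans hcon
      have := Complex.norm_log_one_add_half_le_self (z := f h - 1)
        hhalf
      rw [add_sub_cancel] at this
      calc ‖Complex.log (f h)‖ ≤ 3/2 * ‖f h - 1‖ := this
        _ ≤ 3/2 * (2 ^ d * x ^ (h:ℕ)) := by
                        exact mul_le_mul_of_nonneg_left (hf_sub_one h) (by norm_num)
    have hMf : Multipliable f :=
      Complex.multipliable_of_summable_log hlog_f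
    have habs_eq : ‖∏' h, f h‖ = ∏' h, ‖f h‖ :=
      hMf.norm_tprod
    have hMabsf : Multipliable (fun h => ‖f h‖) := hMf.norm
    have hcomp : ∏' h, ‖f h‖ ≤ ∏' h, (g h * w h) := by
      apply le_of_tendsto_of_tendsto' hMabsf.hasProd hMgw.hasProd
      intro s
      exact Finset.prod_le_prod (fun i _ => norm_nonneg _) (fun i _ => hfw i)
    have hmulsplit : ∏' h, (g h * w h) = (∏' h, g h) * ∏' h, w h := hMg.tprod_mul hMw
    rw [hprodF, habs_eq, hprodFR]
    calc ∏' h, ‖f h‖ ≤ (∏' h, g h) * ∏' h, w h := hcomp.trans_eq hmulsplit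
      _ ≤ (∏' h, g h) * ∏ h ∈ sFin, w h := mul_le_mul_of_nonneg_left hWle hG0
      _ = (∏' h, g h) * Real.exp (-C * ∑' h : multiSr m p r, nintDist ((h:ℕ) * y) ^ 2) := by
          rw [hprod_s]

end
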